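/- Let U ⊂ C((-∞,0],ℝ^n) be open, f : U → ℝ^n continuous, T > 0, and dom_T = {ξ ∈ C((-∞,T],ℝ^n) : ξ_t ∈ U for all t ∈ [0,T]}. Then the substitution operator F_T : dom_T → C([0,T],ℝ^n), F_T(ξ)(t) = f(ξ_t), is well-defined and continuous, where C([0,T],ℝ^n) carries the sup norm. -/

import Mathlib

open Set

/-- The segment `ξ_t ∈ C((-∞,0],ℝⁿ)` of `ξ ∈ C((-∞,T],ℝⁿ)`, for `t ≤ T`. -/
def segT {E : Type*} [TopologicalSpace E] {T : ℝ} (ξ : C(Set.Iic T, E))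
    (t : ℝ) (ht : t ≤ T) : C(Set.Iic (0:ℝ), E) :=
  ξ.comp ⟨fun s => ⟨t + s.1, by
      have h := s.2
      simp only [Set.mem_Iic] at h ⊢
      linarith⟩, by
    apply Continuous.subtype_mk
    fun_prop⟩

/-- For `U ⊆ C((-∞,0],ℝⁿ)` open, `f : U → ℝⁿ` continuous, `T > 0`
and `dom_T = {ξ : ξ_t ∈ U for all t ∈ [0,T]}`, the substitution operator
`F_T : dom_T → C([0,T],ℝⁿ)`, `F_T(ξ)(t) = f(ξ_t)`, is well defined and
continuous, where `C([0,T],ℝⁿ)` carries the sup norm. -/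
theorem substitution_operator_FT_continuous (n : ℕ)
    (U : Set C(Set.Iic (0:ℝ), Fin n → ℝ)) (hU : IsOpen U)
    (f : C(Set.Iic (0:ℝ), Fin n → ℝ) → (Fin n → ℝ)) (hf : ContinuousOn f U)
    (T : ℝ) (hT : 0 < T) :
    ∃ F : C(Set.Iic T, Fin n → ℝ) → C(Set.Icc (0:ℝ) T, Fin n → ℝ),
      (∀ ξ ∈ {ξ : C(Set.Iic T, Fin n → ℝ) |
          ∀ (t : ℝ) (ht0 : 0 ≤ t) (htT : t ≤ T), segT ξ t htT ∈ U},
        ∀ t : Set.Icc (0:ℝ) T, F ξ t = f (segT ξ t.1 t.2.2)) ∧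
      ContinuousOn F {ξ : C(Set.Iic T, Fin n → ℝ) |
        ∀ (t : ℝ) (ht0 : 0 ≤ t) (htT : t ≤ T), segT ξ t htT ∈ U} := by
  classical
  have : LocallyCompactSpace (Set.Iic T) := (isClosed_Iic).locallyCompactSpace
  set dom : Set C(Set.Iic T, Fin n → ℝ) :=
    {ξ | ∀ (t : ℝ) (ht0 : 0 ≤ t) (htT : t ≤ T), segT ξ t htT ∈ U} with hdom
  -- the shift map
  set Φ : C(Set.Iic T, Fin n → ℝ) × Set.Icc (0:ℝ) T → C(Set.Iic (0:ℝ), Fin n → ℝ) :=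
    fun p => segT p.1 p.2.1 p.2.2.2 with hΦ
  have hΦsegT : ∀ (ξ : C(Set.Iic T, Fin n → ℝ)) (t : ℝ) (ht0 : 0 ≤ t) (htT : t ≤ T),
      Φ (ξ, ⟨t, ht0, htT⟩) = segT ξ t htT := fun _ _ _ _ => rfl
  have hΦc : Continuous Φ := by
    apply ContinuousMap.continuous_of_continuous_uncurry
    -- uncurried : ((ξ, t), s) ↦ ξ ⟨t + s, _⟩
    have h1 : Continuous fun q : (C(Set.Iic T, Fin n → ℝ) × Set.Icc (0:ℝ) T) × Set.Iic (0:ℝ) =>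
        ((⟨q.1.2.1 + q.2.1, by
          have h := q.2.2
          have h2 := q.1.2.2.2
          simp only [Set.mem_Iic] at h ⊢
          linarith⟩ : Set.Iic T)) := by
      apply Continuous.subtype_mk
      fun_prop
    exact ContinuousEval.continuous_eval.comp ((continuous_fst.comp continuous_fst).prodMk h1)
  -- well-definedness: for ξ ∈ dom, t ↦ f(segT ξ t) is continuous
  have hwd : ∀ ξ ∈ dom, Continuous fun t : Set.Icc (0:ℝ) T => f (segT ξ t.1 t.2.2) := by
    intro ξ hξ
    exact hf.comp_continuous (hΦc.comp (Continuous.prodMk_right ξ))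
      (fun t => hξ t.1 t.2.1 t.2.2)
  set F : C(Set.Iic T, Fin n → ℝ) → C(Set.Icc (0:ℝ) T, Fin n → ℝ) :=
    fun ξ => if h : ξ ∈ dom then ⟨fun t => f (segT ξ t.1 t.2.2), hwd ξ h⟩ else 0 with hF
  refine ⟨F, ?_, ?_⟩
  · intro ξ hξ t
    simp only [hF, dif_pos hξ]
    rfl
  · intro ξ₀ hξ₀
    -- tube lemma: get open W ∋ ξ₀ with W × Icc ⊆ Φ⁻¹ U
    have hopen : IsOpen (Φ ⁻¹' U) := hU.preimage hΦc
    have hsub : {ξ₀} ×ˢ (univ : Set (Set.Icc (0:ℝ) T)) ⊆ Φ ⁻¹' U := by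
      rintro ⟨ξ, t⟩ ⟨hξ, -⟩
      simp only [mem_singleton_iff] at hξ
      subst hξ
      exact hξ₀ t.1 t.2.1 t.2.2
    obtain ⟨W, V, hW, -, hξ₀W, hVuniv, hWV⟩ :=
      generalized_tube_lemma isCompact_singleton isCompact_univ hopen hsub
    have hξ₀W : ξ₀ ∈ W := hξ₀W rfl
    have hWU : ∀ (ξ : W) (t : Set.Icc (0:ℝ) T), Φ (ξ.1, t) ∈ U := by
      intro ξ t
      exact hWV ⟨ξ.2, hVuniv (mem_univ t)⟩
    -- g : C(W × Icc, ℝⁿ)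
    have hgc : Continuous fun p : W × Set.Icc (0:ℝ) T => f (Φ (p.1.1, p.2)) :=
      hf.comp_continuous (hΦc.comp ((continuous_subtype_val.comp continuous_fst).prodMk
        continuous_snd)) (fun p => hWU p.1 p.2)
    set g : C(W × Set.Icc (0:ℝ) T, Fin n → ℝ) := ⟨_, hgc⟩ with hg
    set G : W → C(Set.Icc (0:ℝ) T, Fin n → ℝ) := fun ξ => (ContinuousMap.curry g) ξ with hG
    have hGc : Continuous G := (ContinuousMap.curry g).continuous
    -- F = G on dom ∩ W
    rw [← continuousWithinAt_inter (hW.mem_nhds hξ₀W)]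
    have : ContinuousOn F (dom ∩ W) := by
      rw [continuousOn_iff_continuous_restrict]
      have : domRestrict (dom ∩ W) F = G ∘ (fun p : ↥(dom ∩ W) => (⟨p.1, p.2.2⟩ : W)) := by
        funext p
        simp only [Function.comp_apply, domRestrict_apply]
        ext t
        simp only [hF, dif_pos p.2.1, hG]
        rfl
      rw [this]
      exact hGc.comp (Continuous.subtype_mk continuous_subtype_val _)
    exact this ξ₀ ⟨hξ₀, hξ₀W⟩
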